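/- Let (s_n)_{n≥1} ⊆ (0,1) satisfy s_2 < 1 - s_1/(1 - s_1) and s_n ≤ s_{n-2}/2 - 2·s_{n-1} for all n ≥ 3, and define c_n := s_n for n odd and c_n := 1 - s_n for n even. Then the Haar function h of the associated RWPS satisfies h(2n) < h(2n-1) for all n ≥ 1; in particular, h is not increasing. -/
import Mathlib


theorem stmt8 (s c h : ℕ → ℝ)
    (hs : ∀ n, 1 ≤ n → s n ∈ Set.Ioo (0 : ℝ) 1)
    (h1 : s 2 < 1 - s 1 / (1 - s 1))
    (h2 : ∀ n, 3 ≤ n → s n ≤ s (n - 2) / 2 - 2 * s (n - 1))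
    (hcodd : ∀ n, 1 ≤ n → Odd n → c n = s n)
    (hceven : ∀ n, 1 ≤ n → Even n → c n = 1 - s n)
    (hh0 : h 0 = 1) (hh1 : h 1 = 1 / c 1)
    (hhrec : ∀ n, 1 ≤ n → h (n + 1) = h n * (1 - c n) / c (n + 1)) :
    (∀ n : ℕ, 1 ≤ n → h (2 * n) < h (2 * n - 1)) ∧ ¬ Monotone h := by
  -- c n ∈ (0,1) for n ≥ 1
  have hc : ∀ n, 1 ≤ n → 0 < c n ∧ c n < 1 := by
    intro n hn
    rcases Nat.even_or_odd n with he | ho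
    · rw [hceven n hn he]
      have := hs n hn
      constructor <;> [linarith [this.2]; linarith [this.1]]
    · rw [hcodd n hn ho]
      exact ⟨(hs n hn).1, (hs n hn).2⟩
  -- h is positive
  have hhpos : ∀ n, 0 < h n := by
    intro n
    induction n with
    | zero => rw [hh0]; norm_num
    | succ m ih =>
      rcases Nat.eq_zero_or_pos m with hm | hm
      · subst hm; rw [hh1]
        exact div_pos one_pos (hc 1 le_rfl).1
      · rw [hhrec m hm]
        have h1m := hc m hm
        have h2m := hc (m + 1) (by omega)
        exact div_pos (mul_pos ih (by linarith [h1m.2])) h2m.1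
  -- s is strictly decreasing from index 1 (for k ≥ 2, s k < s (k-1))
  have hdec : ∀ k, 2 ≤ k → s k < s (k - 1) := by
    intro k hk
    have h3 : 3 ≤ k + 1 := by omega
    have := h2 (k + 1) h3
    have he1 : k + 1 - 2 = k - 1 := by omega
    have he2 : k + 1 - 1 = k := by omega
    rw [he1, he2] at this
    have hsk1 : 0 < s (k + 1) := (hs (k + 1) (by omega)).1
    have hskm : s (k - 1) < 1 := (hs (k - 1) (by omega)).2
    have hskp : 0 < s (k - 1) := (hs (k - 1) (by omega)).1
    linarith
  have main : ∀ n : ℕ, 1 ≤ n → h (2 * n) < h (2 * n - 1) := by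
    intro n hn
    have hkey : 2 * n = (2 * n - 1) + 1 := by omega
    have h2n1 : 1 ≤ 2 * n - 1 := by omega
    have hrec := hhrec (2 * n - 1) h2n1
    rw [← hkey] at hrec
    have hodd : Odd (2 * n - 1) := by
      refine ⟨n - 1, by omega⟩
    have heven : Even (2 * n) := ⟨n, by ring⟩
    rw [hcodd _ h2n1 hodd, hceven (2 * n) (by omega) heven] at hrec
    have hslt : s (2 * n) < s (2 * n - 1) := by
      have := hdec (2 * n) (by omega)
      simpa using this
    have hs2n := hs (2 * n) (by omega)
    have hs2n1 := hs (2 * n - 1) h2n1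
    have hpos : 0 < h (2 * n - 1) := hhpos _
    rw [hrec]
    rw [div_lt_iff₀ (by linarith [hs2n.2])]
    nlinarith [hs2n1.2, hs2n.1]
  refine ⟨main, fun hmono => ?_⟩
  have := main 1 le_rfl
  norm_num at this
  exact absurd (hmono (show (1:ℕ) ≤ 2 by norm_num)) (not_le.mpr this)
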